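/- Let A be a nonempty compact set in ℝⁿ and let k ≥ 2 be an integer. Then Vol_n(A(k)) ≥ ((k−1)/k)^{n−1} · Vol_n(A(k−1)). -/

import Mathlib

open MeasureTheory Finset
open scoped Pointwise ENNReal RealInnerProductSpace

/-- The Minkowski average `A(k) = (A + ⋯ + A)/k` (`k` Minkowski summands) of a set
`A ⊆ ℝⁿ`: the set of all averages `(a 1 + ⋯ + a k)/k` with each `a i ∈ A`. -/
def minkAvg {n : ℕ} (A : Set (EuclideanSpace ℝ (Fin n))) (k : ℕ) :
    Set (EuclideanSpace ℝ (Fin n)) :=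
  {x | ∃ a : Fin k → EuclideanSpace ℝ (Fin n), (∀ i, a i ∈ A) ∧ x = (k : ℝ)⁻¹ • ∑ i, a i}

/-- The `m`-fold Minkowski sumset of `A`. -/
def mwSum {n : ℕ} (A : Set (EuclideanSpace ℝ (Fin n))) (m : ℕ) :
    Set (EuclideanSpace ℝ (Fin n)) :=
  {x | ∃ a : Fin m → EuclideanSpace ℝ (Fin n), (∀ i, a i ∈ A) ∧ x = ∑ i, a i}

lemma minkAvg_eq_smul {n : ℕ} (A : Set (EuclideanSpace ℝ (Fin n))) (m : ℕ) :
    minkAvg A m = (m : ℝ)⁻¹ • mwSum A m := by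
  ext x
  simp only [minkAvg, mwSum, Set.mem_setOf_eq, Set.mem_smul_set]
  constructor
  · rintro ⟨a, ha, rfl⟩
    exact ⟨∑ i, a i, ⟨a, ha, rfl⟩, rfl⟩
  · rintro ⟨y, ⟨a, ha, rfl⟩, rfl⟩
    exact ⟨a, ha, rfl⟩

lemma isCompact_mwSum {n : ℕ} {A : Set (EuclideanSpace ℝ (Fin n))} (hA : IsCompact A) (m : ℕ) :
    IsCompact (mwSum A m) := by
  have h : mwSum A m
      = (fun a : Fin m → EuclideanSpace ℝ (Fin n) => ∑ i, a i) ''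
        (Set.univ.pi fun _ => A) := by
    ext x
    simp only [mwSum, Set.mem_setOf_eq, Set.mem_image, Set.mem_pi, Set.mem_univ, true_implies]
    exact ⟨fun ⟨a, ha, hx⟩ => ⟨a, ha, hx.symm⟩, fun ⟨a, ha, hx⟩ => ⟨a, ha, hx.symm⟩⟩
  rw [h]
  exact (isCompact_univ_pi fun _ => hA).image
    (continuous_finset_sum _ fun i _ => continuous_apply i)

private lemma exists_block {M t : ℝ} (hM : 0 < M) (m : ℕ) (h0 : 0 ≤ t) (h1 : t < m * M) :
    ∃ j, j < m ∧ (j : ℝ) * M ≤ t ∧ t < ((j : ℝ) + 1) * M := by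
  refine ⟨⌊t / M⌋₊, ?_, ?_, ?_⟩
  · rw [Nat.floor_lt (by positivity), div_lt_iff₀ hM]
    linarith
  · have h := Nat.floor_le (show 0 ≤ t / M by positivity)
    have := mul_le_mul_of_nonneg_right h hM.le
    rwa [div_mul_cancel₀ t hM.ne'] at this
  · have h := Nat.lt_floor_add_one (t / M)
    have := (div_lt_iff₀ hM).1 h
    linarith

private lemma slab_disjoint {base M : ℝ} (hM : 0 < M) {i j : ℕ} (hij : i ≠ j) :
    Disjoint (Set.Ico (base + i * M) (base + (i + 1) * M))
      (Set.Ico (base + j * M) (base + (j + 1) * M)) := by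
  rw [Set.disjoint_left]
  rintro x ⟨hx1, hx2⟩ ⟨hy1, hy2⟩
  rcases hij.lt_or_gt with h | h
  · have hij' : ((i : ℝ) + 1) ≤ j := by exact_mod_cast h
    nlinarith
  · have hij' : ((j : ℝ) + 1) ≤ i := by exact_mod_cast h
    nlinarith

private lemma comb_sum (c : ℕ → ℝ≥0∞) (m j₀ : ℕ) (hj₀ : j₀ ≤ m) :
    (∑ j ∈ Finset.Icc 1 m, min (c (j - 1)) (c j)) + c j₀
      ≤ ∑ j ∈ Finset.range (m + 1), c j := by
  have h1 : (∑ j ∈ Finset.Icc 1 m, min (c (j - 1)) (c j))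
      ≤ ∑ j ∈ (Finset.range (m + 1)).erase j₀, c j := by
    have h2 : (∑ j ∈ Finset.Icc 1 m, min (c (j - 1)) (c j))
        ≤ ∑ j ∈ Finset.Icc 1 m, c (if j ≤ j₀ then j - 1 else j) := by
      refine Finset.sum_le_sum fun j hj => ?_
      split_ifs
      · exact min_le_left _ _
      · exact min_le_right _ _
    refine h2.trans ?_
    have hinj : ∀ x ∈ Finset.Icc 1 m, ∀ y ∈ Finset.Icc 1 m,
        (if x ≤ j₀ then x - 1 else x) = (if y ≤ j₀ then y - 1 else y) → x = y := by
      intro x hx y hy h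
      simp only [Finset.mem_Icc] at hx hy
      split_ifs at h <;> omega
    calc ∑ j ∈ Finset.Icc 1 m, c (if j ≤ j₀ then j - 1 else j)
        = ∑ i ∈ (Finset.Icc 1 m).image (fun j => if j ≤ j₀ then j - 1 else j), c i :=
          (Finset.sum_image hinj).symm
      _ ≤ ∑ j ∈ (Finset.range (m + 1)).erase j₀, c j := by
          refine Finset.sum_le_sum_of_subset ?_
          intro x hx
          simp only [Finset.mem_image, Finset.mem_Icc] at hx
          obtain ⟨j, hj, rfl⟩ := hx
          simp only [Finset.mem_erase, Finset.mem_range]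
          split_ifs <;> omega
  calc (∑ j ∈ Finset.Icc 1 m, min (c (j - 1)) (c j)) + c j₀
      ≤ (∑ j ∈ (Finset.range (m + 1)).erase j₀, c j) + c j₀ := add_le_add_left h1 _
    _ = ∑ j ∈ Finset.range (m + 1), c j :=
        Finset.sum_erase_add _ _ (by simp only [Finset.mem_range]; omega)

private lemma null_level {n : ℕ} (u : EuclideanSpace ℝ (Fin n)) (hu : u ≠ 0) (r : ℝ) :
    volume {x : EuclideanSpace ℝ (Fin n) | ⟪u, x⟫ = r} = 0 := by
  set K : Submodule ℝ (EuclideanSpace ℝ (Fin n)) := LinearMap.ker (innerSL ℝ u).toLinearMap with hKdef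
  have hne : ⟪u, u⟫ ≠ 0 := inner_self_ne_zero.2 hu
  have hK : K ≠ ⊤ := by
    intro h
    have hmem : u ∈ K := h ▸ Submodule.mem_top
    have : ⟪u, u⟫ = 0 := by simpa [hKdef, LinearMap.mem_ker, ContinuousLinearMap.coe_coe, innerSL_apply_apply] using hmem
    exact hne this
  have hsub : {x : EuclideanSpace ℝ (Fin n) | ⟪u, x⟫ = r}
      ⊆ ((r / ⟪u, u⟫) • u) +ᵥ (K : Set (EuclideanSpace ℝ (Fin n))) := by
    intro x hx
    rw [Set.mem_vadd_set]
    refine ⟨x - (r / ⟪u, u⟫) • u, ?_, by simp [vadd_eq_add]⟩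
    simp only [SetLike.mem_coe, hKdef, LinearMap.mem_ker, ContinuousLinearMap.coe_coe, innerSL_apply_apply]
    rw [inner_sub_right, inner_smul_right]
    rw [Set.mem_setOf_eq] at hx
    rw [hx, div_mul_cancel₀ r hne, sub_self]
  refine measure_mono_null hsub ?_
  rw [measure_vadd]
  exact Measure.addHaar_submodule volume K hK


private lemma key_ineq {n : ℕ} (hn : 0 < n) (A : Set (EuclideanSpace ℝ (Fin n)))
    (hcpt : IsCompact A) (m : ℕ) (hm : 1 ≤ m) :
    ((m + 1 : ℕ) : ℝ≥0∞) * volume (mwSum A m) ≤ (m : ℝ≥0∞) * volume (mwSum A (m + 1)) := by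
  haveI : Nontrivial (EuclideanSpace ℝ (Fin n)) :=
    Module.nontrivial_of_finrank_pos (R := ℝ) (by rw [finrank_euclideanSpace_fin]; omega)
  by_cases htriv : ∀ p ∈ A, ∀ q ∈ A, p = q
  · have h0 : volume (mwSum A m) = 0 := by
      rcases Set.eq_empty_or_nonempty A with hA | ⟨p, hp⟩
      · have hemp : mwSum A m = ∅ := by
          ext x
          simp only [mwSum, Set.mem_setOf_eq, Set.mem_empty_iff_false, iff_false, not_exists]
          rintro a ⟨ha, -⟩
          exact absurd (ha ⟨0, hm⟩) (by simp [hA])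
        simp [hemp]
      · have hsub : mwSum A m ⊆ {(m : ℕ) • p} := by
          rintro x ⟨a, ha, rfl⟩
          have hap : ∀ i, a i = p := fun i => htriv _ (ha i) _ hp
          simp [hap, Finset.sum_const, Finset.card_univ]
        exact measure_mono_null hsub (measure_singleton _)
    simp [h0]
  · push_neg at htriv
    obtain ⟨p, hp, q, hq, hpq⟩ := htriv
    have hu : q - p ≠ 0 := sub_ne_zero.2 (Ne.symm hpq)
    obtain ⟨f, hfdef⟩ : ∃ f : EuclideanSpace ℝ (Fin n) → ℝ,
        f = fun x => ⟪q - p, x⟫ := ⟨_, rfl⟩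
    have hfc : Continuous f := by
      rw [hfdef]; exact continuous_const.inner continuous_id
    have hfadd : ∀ x y, f (x + y) = f x + f y := by
      intro x y; rw [hfdef]; exact inner_add_right _ _ _
    have hfsum : ∀ {l : ℕ} (a : Fin l → EuclideanSpace ℝ (Fin n)),
        f (∑ i, a i) = ∑ i, f (a i) := by
      intro l a; rw [hfdef]; exact inner_sum _ _ _
    have hflevel : ∀ r : ℝ, volume {x : EuclideanSpace ℝ (Fin n) | f x = r} = 0 := by
      intro r; rw [hfdef]; exact null_level _ hu r
    obtain ⟨a₀, ha₀A, ha₀⟩ := hcpt.exists_isMinOn ⟨p, hp⟩ hfc.continuousOn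
    obtain ⟨a₁, ha₁A, ha₁⟩ := hcpt.exists_isMaxOn ⟨p, hp⟩ hfc.continuousOn
    set α := f a₀ with hα
    set β := f a₁ with hβ
    set M := β - α with hMdef
    have hmin : ∀ x ∈ A, α ≤ f x := fun x hx => isMinOn_iff.1 ha₀ x hx
    have hmax : ∀ x ∈ A, f x ≤ β := fun x hx => isMaxOn_iff.1 ha₁ x hx
    have hM : 0 < M := by
      have h1 : f q - f p = ⟪q - p, q - p⟫ := by
        rw [hfdef]; simp only [inner_sub_right]
      have h2 : (0:ℝ) < ⟪q - p, q - p⟫ := by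
        rw [real_inner_self_eq_norm_sq]
        exact pow_pos (norm_pos_iff.2 hu) 2
      have h3 := hmin p hp
      have h4 := hmax q hq
      rw [hMdef]; linarith
    set B := mwSum A m with hBdef
    have hBcpt : IsCompact B := isCompact_mwSum hcpt m
    have hBmeas : MeasurableSet B := hBcpt.isClosed.measurableSet
    have hBfin : volume B ≠ ⊤ := hBcpt.measure_lt_top.ne
    have hfB : ∀ x ∈ B, (m : ℝ) * α ≤ f x ∧ f x ≤ (m : ℝ) * β := by
      rintro x ⟨a, ha, rfl⟩
      rw [hfsum a]
      constructor
      · calc (m : ℝ) * α = ∑ _i : Fin m, α := by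
              simp [Finset.sum_const, Finset.card_univ, mul_comm]
          _ ≤ ∑ i, f (a i) := Finset.sum_le_sum fun i _ => hmin _ (ha i)
      · calc (∑ i, f (a i)) ≤ ∑ _i : Fin m, β := Finset.sum_le_sum fun i _ => hmax _ (ha i)
          _ = (m : ℝ) * β := by simp [Finset.sum_const, Finset.card_univ, mul_comm]
    set c : ℕ → ℝ≥0∞ := fun j =>
      volume (B ∩ f ⁻¹' Set.Ico ((m:ℝ) * α + (j:ℝ) * M) ((m:ℝ) * α + ((j:ℝ) + 1) * M))
      with hcdef
    have hslabmeas : ∀ l r : ℝ, MeasurableSet (f ⁻¹' Set.Ico l r) := fun l r =>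
      (measurableSet_Ico).preimage hfc.measurable
    -- covering bound
    have hcover : volume B ≤ ∑ j ∈ Finset.range m, c j := by
      have hsubc : B ⊆ (⋃ j ∈ Finset.range m,
          B ∩ f ⁻¹' Set.Ico ((m:ℝ) * α + (j:ℝ) * M) ((m:ℝ) * α + ((j:ℝ) + 1) * M))
          ∪ {x | f x = (m:ℝ) * β} := by
        intro x hxB
        obtain ⟨h1, h2⟩ := hfB x hxB
        rcases eq_or_lt_of_le h2 with heq | hlt
        · exact Or.inr heq
        · left
          have hmβ : (m:ℝ) * β = (m:ℝ) * α + (m:ℝ) * M := by rw [hMdef]; ring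
          obtain ⟨j, hjm, hj1, hj2⟩ := exists_block hM m
            (t := f x - (m:ℝ) * α) (by linarith) (by linarith)
          refine Set.mem_biUnion (Finset.mem_range.2 hjm) ⟨hxB, ?_⟩
          simp only [Set.mem_preimage, Set.mem_Ico]
          constructor <;> linarith
      calc volume B ≤ volume ((⋃ j ∈ Finset.range m,
            B ∩ f ⁻¹' Set.Ico ((m:ℝ) * α + (j:ℝ) * M) ((m:ℝ) * α + ((j:ℝ) + 1) * M))
            ∪ {x | f x = (m:ℝ) * β}) := measure_mono hsubc
        _ ≤ volume (⋃ j ∈ Finset.range m,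
            B ∩ f ⁻¹' Set.Ico ((m:ℝ) * α + (j:ℝ) * M) ((m:ℝ) * α + ((j:ℝ) + 1) * M))
            + volume {x | f x = (m:ℝ) * β} := measure_union_le _ _
        _ ≤ (∑ j ∈ Finset.range m, c j) + 0 :=
            add_le_add (measure_biUnion_finset_le _ _) (hflevel _).le
        _ = ∑ j ∈ Finset.range m, c j := add_zero _
    -- disjointness bound
    have hdisj : ∑ j ∈ Finset.range (m + 1), c j ≤ volume B := by
      have heq : ∑ j ∈ Finset.range (m + 1), c j
          = volume (⋃ j ∈ Finset.range (m + 1),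
            B ∩ f ⁻¹' Set.Ico ((m:ℝ) * α + (j:ℝ) * M) ((m:ℝ) * α + ((j:ℝ) + 1) * M)) := by
        rw [measure_biUnion_finset]
        · intro i _ j _ hij
          exact Set.disjoint_of_subset Set.inter_subset_right Set.inter_subset_right
            (Disjoint.preimage f (slab_disjoint hM hij))
        · intro j _
          exact hBmeas.inter (hslabmeas _ _)
      rw [heq]
      exact measure_mono (Set.iUnion₂_subset fun j _ => Set.inter_subset_left)
    -- translates sit inside the bigger sumset
    have htrans : ∀ a ∈ A, (a +ᵥ B) ⊆ mwSum A (m + 1) := by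
      intro a haA x hx
      rw [Set.mem_vadd_set] at hx
      obtain ⟨b, ⟨g, hg, rfl⟩, rfl⟩ := hx
      refine ⟨Fin.cons a g, fun i => Fin.cases haA hg i, ?_⟩
      rw [Fin.sum_cons, vadd_eq_add]
    have hvcpt : ∀ v : EuclideanSpace ℝ (Fin n), IsCompact (v +ᵥ B) := by
      intro v
      rw [← Set.image_vadd]
      exact hBcpt.image (continuous_const_vadd v)
    have hvmeas : ∀ v : EuclideanSpace ℝ (Fin n), MeasurableSet (v +ᵥ B) := fun v =>
      (hvcpt v).isClosed.measurableSet
    -- shifting slabs across translates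
    have hshift : ∀ (v : EuclideanSpace ℝ (Fin n)) (l r : ℝ),
        volume ((v +ᵥ B) ∩ f ⁻¹' Set.Ico l r)
          = volume (B ∩ f ⁻¹' Set.Ico (l - f v) (r - f v)) := by
      intro v l r
      have hset : (v +ᵥ B) ∩ f ⁻¹' Set.Ico l r
          = v +ᵥ (B ∩ f ⁻¹' Set.Ico (l - f v) (r - f v)) := by
        ext x
        simp only [Set.mem_inter_iff, Set.mem_vadd_set, Set.mem_preimage, Set.mem_Ico,
          vadd_eq_add]
        constructor
        · rintro ⟨⟨b, hb, rfl⟩, h2⟩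
          rw [hfadd] at h2
          exact ⟨b, ⟨hb, by constructor <;> linarith [h2.1, h2.2]⟩, rfl⟩
        · rintro ⟨b, ⟨hb, h1, h2⟩, rfl⟩
          exact ⟨⟨b, hb, rfl⟩, by rw [hfadd]; constructor <;> linarith⟩
      rw [hset, measure_vadd]
    -- the intersection of the two translates
    have hIbound : volume ((a₀ +ᵥ B) ∩ (a₁ +ᵥ B))
        ≤ ∑ j ∈ Finset.Icc 1 m, min (c (j - 1)) (c j) := by
      have hIsub : (a₀ +ᵥ B) ∩ (a₁ +ᵥ B) ⊆ ⋃ j ∈ Finset.Icc 1 m,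
          ((a₀ +ᵥ B) ∩ (a₁ +ᵥ B)) ∩
            f ⁻¹' Set.Ico (((m:ℝ) + 1) * α + (j:ℝ) * M) (((m:ℝ) + 1) * α + ((j:ℝ) + 1) * M) := by
        rintro x ⟨hx0, hx1⟩
        obtain ⟨b0, hb0, hxb0⟩ := Set.mem_vadd_set.1 hx0
        obtain ⟨b1, hb1, hxb1⟩ := Set.mem_vadd_set.1 hx1
        have hf0 := hfB b0 hb0
        have hf1 := hfB b1 hb1
        have hfx0 : f x = α + f b0 := by rw [← hxb0, vadd_eq_add, hfadd]
        have hfx1 : f x = β + f b1 := by rw [← hxb1, vadd_eq_add, hfadd]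
        have ht1 : M ≤ f x - (((m:ℝ) + 1) * α) := by
          rw [hfx1, hMdef]; nlinarith [hf1.1]
        have ht2 : f x - (((m:ℝ) + 1) * α) ≤ (m:ℝ) * M := by
          rw [hfx0, hMdef]; nlinarith [hf0.2]
        obtain ⟨j, hjm, hj1, hj2⟩ := exists_block hM (m + 1)
          (t := f x - (((m:ℝ) + 1) * α)) (by linarith) (by push_cast; nlinarith)
        have hj1' : 1 ≤ j := by
          by_contra hcon
          push_neg at hcon
          interval_cases j
          simp only [Nat.cast_zero, zero_mul] at hj1 hj2
          linarith
        refine Set.mem_biUnion (Finset.mem_Icc.2 ⟨hj1', by omega⟩) ⟨⟨hx0, hx1⟩, ?_⟩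
        simp only [Set.mem_preimage, Set.mem_Ico]
        constructor <;> linarith
      refine (measure_mono hIsub).trans ((measure_biUnion_finset_le _ _).trans ?_)
      refine Finset.sum_le_sum fun j hj => ?_
      rw [Finset.mem_Icc] at hj
      refine le_min ?_ ?_
      · calc volume (((a₀ +ᵥ B) ∩ (a₁ +ᵥ B)) ∩
              f ⁻¹' Set.Ico (((m:ℝ) + 1) * α + (j:ℝ) * M) (((m:ℝ) + 1) * α + ((j:ℝ) + 1) * M))
            ≤ volume ((a₁ +ᵥ B) ∩
              f ⁻¹' Set.Ico (((m:ℝ) + 1) * α + (j:ℝ) * M) (((m:ℝ) + 1) * α + ((j:ℝ) + 1) * M)) :=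
              measure_mono (Set.inter_subset_inter_left _ Set.inter_subset_right)
          _ = c (j - 1) := by
              rw [hshift]
              have hcast : ((j - 1 : ℕ) : ℝ) = (j:ℝ) - 1 := by
                rw [Nat.cast_sub hj.1]; norm_num
              have e1 : ((m:ℝ) + 1) * α + (j:ℝ) * M - β
                  = (m:ℝ) * α + ((j - 1 : ℕ) : ℝ) * M := by
                rw [hcast, hMdef]; ring
              have e2 : ((m:ℝ) + 1) * α + ((j:ℝ) + 1) * M - β
                  = (m:ℝ) * α + (((j - 1 : ℕ) : ℝ) + 1) * M := by
                rw [hcast, hMdef]; ring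
              rw [← hβ, e1, e2]
      · calc volume (((a₀ +ᵥ B) ∩ (a₁ +ᵥ B)) ∩
              f ⁻¹' Set.Ico (((m:ℝ) + 1) * α + (j:ℝ) * M) (((m:ℝ) + 1) * α + ((j:ℝ) + 1) * M))
            ≤ volume ((a₀ +ᵥ B) ∩
              f ⁻¹' Set.Ico (((m:ℝ) + 1) * α + (j:ℝ) * M) (((m:ℝ) + 1) * α + ((j:ℝ) + 1) * M)) :=
              measure_mono (Set.inter_subset_inter_left _ Set.inter_subset_left)
          _ = c j := by
              rw [hshift]
              have e1 : ((m:ℝ) + 1) * α + (j:ℝ) * M - α = (m:ℝ) * α + (j:ℝ) * M := by ring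
              have e2 : ((m:ℝ) + 1) * α + ((j:ℝ) + 1) * M - α
                  = (m:ℝ) * α + ((j:ℝ) + 1) * M := by ring
              rw [← hα, e1, e2]
    -- inclusion-exclusion
    have h2a : 2 * volume B ≤ volume (mwSum A (m + 1)) + volume ((a₀ +ᵥ B) ∩ (a₁ +ᵥ B)) := by
      have hui := measure_union_add_inter (μ := volume) (a₀ +ᵥ B) (hvmeas a₁)
      have hv0 : volume (a₀ +ᵥ B) = volume B := measure_vadd volume a₀ B
      have hv1 : volume (a₁ +ᵥ B) = volume B := measure_vadd volume a₁ B
      have hcup : volume ((a₀ +ᵥ B) ∪ (a₁ +ᵥ B)) ≤ volume (mwSum A (m + 1)) :=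
        measure_mono (Set.union_subset (htrans a₀ ha₀A) (htrans a₁ ha₁A))
      calc 2 * volume B = volume (a₀ +ᵥ B) + volume (a₁ +ᵥ B) := by
            rw [hv0, hv1, two_mul]
        _ = volume ((a₀ +ᵥ B) ∪ (a₁ +ᵥ B)) + volume ((a₀ +ᵥ B) ∩ (a₁ +ᵥ B)) := hui.symm
        _ ≤ volume (mwSum A (m + 1)) + volume ((a₀ +ᵥ B) ∩ (a₁ +ᵥ B)) :=
            add_le_add_left hcup _
    -- the largest slab
    obtain ⟨j₀, hj₀mem, hj₀max⟩ := Finset.exists_max_image (Finset.range m) c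
      ⟨0, Finset.mem_range.2 hm⟩
    have hj₀m : j₀ < m := Finset.mem_range.1 hj₀mem
    have h3 : volume B ≤ (m : ℝ≥0∞) * c j₀ := by
      refine hcover.trans ?_
      calc ∑ j ∈ Finset.range m, c j ≤ ∑ _j ∈ Finset.range m, c j₀ :=
            Finset.sum_le_sum fun j hj => hj₀max j hj
        _ = (m : ℝ≥0∞) * c j₀ := by rw [Finset.sum_const, Finset.card_range, nsmul_eq_mul]
    have h2 : volume ((a₀ +ᵥ B) ∩ (a₁ +ᵥ B)) + c j₀ ≤ volume B := by
      calc volume ((a₀ +ᵥ B) ∩ (a₁ +ᵥ B)) + c j₀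
          ≤ (∑ j ∈ Finset.Icc 1 m, min (c (j - 1)) (c j)) + c j₀ := add_le_add_left hIbound _
        _ ≤ ∑ j ∈ Finset.range (m + 1), c j := comb_sum c m j₀ (by omega)
        _ ≤ volume B := hdisj
    -- final arithmetic
    have hfin : (m : ℝ≥0∞) * volume B ≠ ⊤ :=
      ENNReal.mul_ne_top (ENNReal.natCast_ne_top m) hBfin
    have step : ((m + 1 : ℕ) : ℝ≥0∞) * volume B + (m : ℝ≥0∞) * volume B
        ≤ (m : ℝ≥0∞) * volume (mwSum A (m + 1)) + (m : ℝ≥0∞) * volume B := by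
      calc ((m + 1 : ℕ) : ℝ≥0∞) * volume B + (m : ℝ≥0∞) * volume B
          = (m : ℝ≥0∞) * (2 * volume B) + volume B := by push_cast; ring
        _ ≤ (m : ℝ≥0∞) * (volume (mwSum A (m + 1)) + volume ((a₀ +ᵥ B) ∩ (a₁ +ᵥ B)))
              + (m : ℝ≥0∞) * c j₀ := add_le_add (mul_le_mul_right h2a _) h3
        _ = (m : ℝ≥0∞) * volume (mwSum A (m + 1))
              + (m : ℝ≥0∞) * (volume ((a₀ +ᵥ B) ∩ (a₁ +ᵥ B)) + c j₀) := by ring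
        _ ≤ (m : ℝ≥0∞) * volume (mwSum A (m + 1)) + (m : ℝ≥0∞) * volume B :=
            add_le_add_right (mul_le_mul_right h2 _) _
    exact (ENNReal.add_le_add_iff_right hfin).1 step


/-- **Refined superadditivity for Minkowski self-averages** (Corollary 4.2 of
Fradelizi–Madiman–Marsiglietti–Zvavitch): for a nonempty compact `A ⊆ ℝⁿ` and `k ≥ 2`,
`Vol_n(A(k)) ≥ ((k-1)/k)^(n-1) · Vol_n(A(k-1))`. -/
theorem volume_minkAvg_ge {n : ℕ} (A : Set (EuclideanSpace ℝ (Fin n)))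
    (hne : A.Nonempty) (hcpt : IsCompact A) (k : ℕ) (hk : 2 ≤ k) :
    (((k : ℝ≥0∞) - 1) / k) ^ (n - 1) * volume (minkAvg A (k - 1)) ≤ volume (minkAvg A k) := by
  obtain ⟨a, ha⟩ := hne
  rcases Nat.eq_zero_or_pos n with hn0 | hn
  · subst hn0
    haveI : Subsingleton (EuclideanSpace ℝ (Fin 0)) :=
      ⟨fun x y => by ext i; exact i.elim0⟩
    have huniv : ∀ l : ℕ, minkAvg A l = Set.univ := by
      intro l
      apply Set.eq_univ_of_forall
      intro x
      exact ⟨fun _ => a, fun _ => ha, Subsingleton.elim _ _⟩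
    simp only [Nat.zero_sub, pow_zero, one_mul, huniv]
    exact le_rfl
  · obtain ⟨m, rfl⟩ : ∃ m, k = m + 1 := ⟨k - 1, by omega⟩
    have hm : 1 ≤ m := by omega
    have hkey := key_ineq hn A hcpt m hm
    have hvol : ∀ l : ℕ, 1 ≤ l →
        volume (minkAvg A l) = ((l : ℝ≥0∞)⁻¹) ^ n * volume (mwSum A l) := by
      intro l hl
      rw [minkAvg_eq_smul,
        Measure.addHaar_smul_of_nonneg volume (by positivity) (mwSum A l),
        finrank_euclideanSpace_fin]
      congr 1
      rw [ENNReal.ofReal_pow (by positivity),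
        ENNReal.ofReal_inv_of_pos (by exact_mod_cast Nat.lt_of_lt_of_le Nat.zero_lt_one hl),
        ENNReal.ofReal_natCast]
    simp only [Nat.add_sub_cancel]
    rw [hvol (m + 1) (by omega), hvol m hm]
    obtain ⟨N, rfl⟩ : ∃ N, n = N + 1 := ⟨n - 1, by omega⟩
    simp only [Nat.add_sub_cancel]
    have hsub1 : ((m + 1 : ℕ) : ℝ≥0∞) - 1 = (m : ℝ≥0∞) := by
      push_cast
      exact ENNReal.add_sub_cancel_right ENNReal.one_ne_top
    rw [hsub1]
    set x : ℝ≥0∞ := (m : ℝ≥0∞) with hx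
    set y : ℝ≥0∞ := ((m + 1 : ℕ) : ℝ≥0∞) with hy
    have hx0 : x ≠ 0 := by
      rw [hx]; exact Nat.cast_ne_zero.2 (by omega)
    have hxt : x ≠ ⊤ := ENNReal.natCast_ne_top m
    have hy0 : y ≠ 0 := by
      rw [hy]; exact_mod_cast Nat.succ_ne_zero m
    have hyt : y ≠ ⊤ := ENNReal.natCast_ne_top (m + 1)
    set va : ℝ≥0∞ := volume (mwSum A m) with hva
    set vb : ℝ≥0∞ := volume (mwSum A (m + 1)) with hvb
    have hstep : x⁻¹ * va ≤ y⁻¹ * vb := by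
      have h := mul_le_mul_right hkey (x⁻¹ * y⁻¹)
      have e1 : x⁻¹ * y⁻¹ * (y * va) = (y⁻¹ * y) * (x⁻¹ * va) := by ring
      have e2 : x⁻¹ * y⁻¹ * (x * vb) = (x⁻¹ * x) * (y⁻¹ * vb) := by ring
      rw [e1, e2, ENNReal.inv_mul_cancel hy0 hyt, ENNReal.inv_mul_cancel hx0 hxt,
        one_mul, one_mul] at h
      exact h
    calc (x / y) ^ N * (x⁻¹ ^ (N + 1) * va)
        = (x ^ N * x⁻¹ ^ N) * (y⁻¹ ^ N * (x⁻¹ * va)) := by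
          rw [div_eq_mul_inv, mul_pow, pow_succ]; ring
      _ = y⁻¹ ^ N * (x⁻¹ * va) := by
          rw [← mul_pow, ENNReal.mul_inv_cancel hx0 hxt, one_pow, one_mul]
      _ ≤ y⁻¹ ^ N * (y⁻¹ * vb) := mul_le_mul_right hstep _
      _ = y⁻¹ ^ (N + 1) * vb := by rw [pow_succ]; ring
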